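/- Pointwise limit of the regularized entropies: for every c ∈ ℝ, if c ≥ 0 then H_λ(c) converges, as λ → 1⁻, to H_1(c), where H_1(c) = c log c − c + 1 for 0 ≤ c ≤ 1 (with the convention 0·log 0 = 0) and H_1(c) = 0 for c ≥ 1; and if c < 0 then H_λ(c) → +∞ as λ → 1⁻. -/

import Mathlib

open Filter Set Real

/-- The regularized entropy `H_λ` (for `λ ∈ [0,1)`). -/
noncomputable def Hlam (lam c : ℝ) : ℝ :=
  if c ≤ (1 - lam) / 2 then c * Real.log ((1 - lam) / (1 + lam)) + lam
  else if c ≤ (1 + lam) / 2 then c * Real.log (2 * c / (1 + lam)) - c + (1 + lam) / 2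
  else 0

/-- The deep-quench entropy `H_1`: `c log c - c + 1` on `[0,1]` (with `0 log 0 = 0`,
which holds by convention `Real.log 0 = 0`), and `0` for `c ≥ 1`. -/
noncomputable def Hone (c : ℝ) : ℝ :=
  if c ≤ 1 then c * Real.log c - c + 1 else 0

/-- Pointwise limit of the regularized entropies as `λ → 1⁻`. -/
theorem regularized_entropy_pointwise_limit (c : ℝ) :
    (0 ≤ c → Filter.Tendsto (fun lam => Hlam lam c)
      (nhdsWithin 1 (Set.Ico (0:ℝ) 1)) (nhds (Hone c))) ∧
    (c < 0 → Filter.Tendsto (fun lam => Hlam lam c)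
      (nhdsWithin 1 (Set.Ico (0:ℝ) 1)) Filter.atTop) := by
  constructor
  · intro hc
    rcases eq_or_lt_of_le hc with h0 | h0
    · -- c = 0
      have he : ∀ᶠ lam in nhdsWithin (1:ℝ) (Set.Ico 0 1),
          lam = Hlam lam c := by
        filter_upwards [self_mem_nhdsWithin] with lam hlam
        subst h0
        have h1 : (0:ℝ) ≤ (1 - lam) / 2 := by linarith [hlam.2]
        simp [Hlam, h1]
      have hone : Hone c = 1 := by simp [Hone, ← h0]
      rw [hone]
      exact (tendsto_id.mono_left nhdsWithin_le_nhds).congr' he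
    rcases lt_or_ge c 1 with h1 | h1
    · -- 0 < c < 1
      have hone : Hone c = c * Real.log c - c + 1 := if_pos h1.le
      rw [hone]
      have hlog : ContinuousAt (fun lam : ℝ => Real.log (2 * c / (1 + lam))) 1 := by
        have harg : ContinuousAt (fun lam : ℝ => 2 * c / (1 + lam)) 1 := by
          apply ContinuousAt.div continuousAt_const (by fun_prop)
          norm_num
        apply harg.log
        intro h
        rw [div_eq_zero_iff] at h
        rcases h with h | h <;> linarith
      have hcont : ContinuousAt
          (fun lam : ℝ => c * Real.log (2 * c / (1 + lam)) - c + (1 + lam) / 2) 1 := by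
        exact ((continuousAt_const.mul hlog).sub continuousAt_const).add (by fun_prop)
      have hval : (fun lam : ℝ => c * Real.log (2 * c / (1 + lam)) - c + (1 + lam) / 2) 1
          = c * Real.log c - c + 1 := by
        have harg : 2 * c / (1 + (1:ℝ)) = c := by ring
        simp only [harg]
        norm_num
      have htend : Filter.Tendsto
          (fun lam : ℝ => c * Real.log (2 * c / (1 + lam)) - c + (1 + lam) / 2)
          (nhdsWithin 1 (Set.Ico (0:ℝ) 1)) (nhds (c * Real.log c - c + 1)) := by
        rw [← hval]
        exact hcont.continuousWithinAt.tendsto.mono_left (le_refl _)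
      apply htend.congr'
      have ha : max (1 - 2 * c) (2 * c - 1) < 1 := by
        rw [max_lt_iff]; constructor <;> linarith
      filter_upwards [(eventually_gt_nhds ha).filter_mono nhdsWithin_le_nhds] with lam hlam
      have ha1 : 1 - 2 * c < lam := lt_of_le_of_lt (le_max_left _ _) hlam
      have ha2 : 2 * c - 1 < lam := lt_of_le_of_lt (le_max_right _ _) hlam
      unfold Hlam
      rw [if_neg (by linarith), if_pos (by linarith)]
    · -- c ≥ 1
      have hone : Hone c = 0 := by
        unfold Hone
        split_ifs with h
        · have : c = 1 := le_antisymm h h1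
          simp [this]
        · rfl
      rw [hone]
      apply tendsto_const_nhds.congr'
      filter_upwards [self_mem_nhdsWithin] with lam hlam
      unfold Hlam
      rw [if_neg (by linarith [hlam.1]), if_neg (by linarith [hlam.2])]
  · intro hc
    have he : ∀ᶠ lam in nhdsWithin (1:ℝ) (Set.Ico 0 1),
        c * Real.log ((1 - lam) / (1 + lam)) + lam = Hlam lam c := by
      filter_upwards [self_mem_nhdsWithin] with lam hlam
      unfold Hlam
      rw [if_pos (by nlinarith [hlam.2])]
    apply Filter.Tendsto.congr' he
    apply Filter.Tendsto.atTop_add_zero_eventuallyLE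
    · rw [tendsto_const_mul_atTop_of_neg hc]
      apply Real.tendsto_log_nhdsGT_zero.comp
      rw [tendsto_nhdsWithin_iff]
      constructor
      · have : Filter.Tendsto (fun lam : ℝ => (1 - lam) / (1 + lam)) (nhds 1)
            (nhds ((1 - 1) / (1 + 1))) := by
          apply ContinuousAt.tendsto
          apply ContinuousAt.div (by fun_prop) (by fun_prop)
          norm_num
        norm_num at this
        exact this.mono_left nhdsWithin_le_nhds
      · filter_upwards [self_mem_nhdsWithin] with lam hlam
        have := hlam.1; have := hlam.2
        exact Set.mem_Ioi.mpr (div_pos (by linarith) (by linarith))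
    · filter_upwards [self_mem_nhdsWithin] with lam hlam
      exact hlam.1
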